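/- arXiv:2306.17579 — 2 statements merged into one kernel-verified Lean document; each statement's English description precedes it below -/
import Mathlib

section
/- Let L be the Lyapunov operator L(X) = AX + XAᵀ + Σ_{i,j=1}^d k_{ij} N_i X N_jᵀ on symmetric n×n matrices, with K = (k_{ij}) positive semidefinite. If V1, V2 are positive semidefinite symmetric matrices with ⟨V1, V2⟩_F = 0, then ⟨L(V1), V2⟩_F ≥ 0. -/
open Matrix

lemma trace_tmul_self_eq_zero' {m : ℕ} (M : Matrix (Fin m) (Fin m) ℝ)
    (h : (Mᵀ * M).trace = 0) : M = 0 := by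
  have h' : ∑ j, ∑ i, M i j * M i j = 0 := by
    simpa [Matrix.trace, Matrix.diag, Matrix.mul_apply] using h
  ext i j
  have := (Finset.sum_eq_zero_iff_of_nonneg (fun j _ =>
    Finset.sum_nonneg (fun i _ => mul_self_nonneg (M i j)))).mp h' j (Finset.mem_univ j)
  have := (Finset.sum_eq_zero_iff_of_nonneg
    (fun i _ => mul_self_nonneg (M i j))).mp this i (Finset.mem_univ i)
  simpa using mul_self_eq_zero.mp this

theorem stmt_3 (n d : ℕ) (A : Matrix (Fin n) (Fin n) ℝ)
    (N : Fin d → Matrix (Fin n) (Fin n) ℝ)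
    (K : Matrix (Fin d) (Fin d) ℝ) (hK : K.PosSemidef)
    (V1 V2 : Matrix (Fin n) (Fin n) ℝ)
    (hV1 : V1.PosSemidef) (hV2 : V2.PosSemidef)
    (horth : (V1ᵀ * V2).trace = 0) :
    0 ≤ ((A * V1 + V1 * Aᵀ + ∑ i : Fin d, ∑ j : Fin d, K i j • (N i * V1 * (N j)ᵀ))ᵀ * V2).trace := by
  obtain ⟨B, hB⟩ : ∃ B : Matrix (Fin n) (Fin n) ℝ, V1 = Bᴴ * B := by
    open scoped MatrixOrder in
    exact ⟨CFC.sqrt V1, by rw [(CFC.sqrt_nonneg V1).posSemidef.1.eq, CFC.sqrt_mul_sqrt_self V1 hV1.nonneg]⟩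
  obtain ⟨C, hC⟩ : ∃ C : Matrix (Fin n) (Fin n) ℝ, V2 = Cᴴ * C := by
    open scoped MatrixOrder in
    exact ⟨CFC.sqrt V2, by rw [(CFC.sqrt_nonneg V2).posSemidef.1.eq, CFC.sqrt_mul_sqrt_self V2 hV2.nonneg]⟩
  rw [conjTranspose_eq_transpose_of_trivial] at hB hC
  have hV1symm : V1ᵀ = V1 := by
    have := hV1.1; rwa [Matrix.IsHermitian, conjTranspose_eq_transpose_of_trivial] at this
  have hV2symm : V2ᵀ = V2 := by
    have := hV2.1; rwa [Matrix.IsHermitian, conjTranspose_eq_transpose_of_trivial] at this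
  have hBC : B * Cᵀ = 0 := by
    apply trace_tmul_self_eq_zero'
    have : ((B * Cᵀ)ᵀ * (B * Cᵀ)).trace = (V1ᵀ * V2).trace := by
      rw [hV1symm, hB, hC, transpose_mul, transpose_transpose]
      rw [show C * Bᵀ * (B * Cᵀ) = C * (Bᵀ * B * Cᵀ) by simp [Matrix.mul_assoc]]
      rw [trace_mul_comm]
      simp [Matrix.mul_assoc]
    rw [this, horth]
  have hV12 : V1 * V2 = 0 := by
    rw [hB, hC, show Bᵀ * B * (Cᵀ * C) = Bᵀ * ((B * Cᵀ) * C) by simp [Matrix.mul_assoc],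
      hBC]
    simp
  have hV21 : V2 * V1 = 0 := by
    have := congrArg transpose hV12
    simpa [transpose_mul, hV1symm, hV2symm] using this
  rw [transpose_add, transpose_add, Matrix.add_mul, Matrix.add_mul, trace_add, trace_add]
  have h1 : ((A * V1)ᵀ * V2).trace = 0 := by
    rw [transpose_mul, hV1symm, Matrix.mul_assoc, trace_mul_comm,
      Matrix.mul_assoc, hV21]
    simp
  have h2 : ((V1 * Aᵀ)ᵀ * V2).trace = 0 := by
    rw [transpose_mul, transpose_transpose, hV1symm, Matrix.mul_assoc, hV12]
    simp
  rw [h1, h2, zero_add, zero_add]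
  set M : Fin d → Matrix (Fin n) (Fin n) ℝ := fun i => C * N i * Bᵀ with hM
  have hterm : ∀ i j, ((N i * V1 * (N j)ᵀ)ᵀ * V2).trace
      = ∑ p, ∑ q, M i p q * M j p q := by
    intro i j
    have e1 : ∑ p, ∑ q, M i p q * M j p q = ((M i)ᵀ * M j).trace := by
      rw [Matrix.trace]
      simp only [Matrix.diag, Matrix.mul_apply, Matrix.transpose_apply]
      rw [Finset.sum_comm]
    rw [e1, hM]
    have e2 : (C * N i * Bᵀ)ᵀ * (C * N j * Bᵀ)
        = B * ((N i)ᵀ * (Cᵀ * (C * (N j * Bᵀ)))) := by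
      simp [transpose_mul, Matrix.mul_assoc]
    have e3 : (N i * V1 * (N j)ᵀ)ᵀ * V2
        = N j * (V1 * ((N i)ᵀ * V2)) := by
      simp [transpose_mul, hV1symm, Matrix.mul_assoc]
    rw [e2, e3, trace_mul_comm (N j), trace_mul_comm B]
    simp only [Matrix.mul_assoc]
    rw [trace_mul_comm V1, hB, hC]
    congr 1
    simp [Matrix.mul_assoc]
  rw [transpose_sum, Finset.sum_mul, trace_sum]
  have : ∀ i : Fin d, ((∑ j, K i j • (N i * V1 * (N j)ᵀ))ᵀ * V2).trace
      = ∑ j, K i j * ((N i * V1 * (N j)ᵀ)ᵀ * V2).trace := by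
    intro i
    rw [transpose_sum, Finset.sum_mul, trace_sum]
    congr 1; ext j
    rw [transpose_smul, Matrix.smul_mul, trace_smul, smul_eq_mul]
  simp_rw [this, hterm, Finset.mul_sum]
  have e1 : ∀ i : Fin d, (∑ j : Fin d, ∑ p : Fin n, ∑ q : Fin n, K i j * (M i p q * M j p q))
      = ∑ p : Fin n, ∑ j : Fin d, ∑ q : Fin n, K i j * (M i p q * M j p q) :=
    fun i => Finset.sum_comm
  simp_rw [e1]
  rw [Finset.sum_comm]
  have e2 : ∀ p : Fin n, ∀ i : Fin d,
      (∑ j : Fin d, ∑ q : Fin n, K i j * (M i p q * M j p q))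
      = ∑ q : Fin n, ∑ j : Fin d, K i j * (M i p q * M j p q) :=
    fun p i => Finset.sum_comm
  simp_rw [e2]
  have e3 : ∀ p : Fin n,
      (∑ i : Fin d, ∑ q : Fin n, ∑ j : Fin d, K i j * (M i p q * M j p q))
      = ∑ q : Fin n, ∑ i : Fin d, ∑ j : Fin d, K i j * (M i p q * M j p q) :=
    fun p => Finset.sum_comm
  simp_rw [e3]
  apply Finset.sum_nonneg; intro p _
  apply Finset.sum_nonneg; intro q _
  have := hK.dotProduct_mulVec_nonneg (fun i => M i p q)
  simpa [dotProduct, Matrix.mulVec, Finset.mul_sum, mul_comm, mul_left_comm] using this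
end

section
/- Let L : Sym(n,ℝ) → Sym(n,ℝ) be a linear operator on symmetric matrices. Suppose there exists α₀ ∈ ℝ such that for all α > α₀ the operator (αI − L)⁻¹ exists and maps positive semidefinite matrices to positive semidefinite matrices. Then for all positive semidefinite V1, V2 with ⟨V1, V2⟩_F = 0, we have ⟨L(V1), V2⟩_F ≥ 0. -/
open Matrix

attribute [local instance] Matrix.normedAddCommGroup Matrix.normedSpace

lemma psd_trace_nonneg {n : ℕ} {A : Matrix (Fin n) (Fin n) ℝ} (hA : A.PosSemidef) :
    0 ≤ A.trace := by
  have hdiag : ∀ i, 0 ≤ A i i := fun i => hA.diag_nonneg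
  rw [Matrix.trace]
  exact Finset.sum_nonneg fun i _ => hdiag i

lemma psd_trace_mul_nonneg {n : ℕ} {A B : Matrix (Fin n) (Fin n) ℝ}
    (hA : A.PosSemidef) (hB : B.PosSemidef) : 0 ≤ (A * B).trace := by
  obtain ⟨C, rfl⟩ : ∃ C : Matrix (Fin n) (Fin n) ℝ, B = Cᴴ * C := by
    open scoped MatrixOrder in exact CStarAlgebra.nonneg_iff_eq_star_mul_self.mp hB.nonneg
  have h1 : (A * (Cᴴ * C)).trace = (C * A * Cᴴ).trace := by
    rw [← Matrix.mul_assoc, Matrix.trace_mul_cycle]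
  rw [h1]
  exact psd_trace_nonneg (hA.mul_mul_conjTranspose_same C)

lemma psd_isSymm {n : ℕ} {A : Matrix (Fin n) (Fin n) ℝ} (hA : A.PosSemidef) : A.IsSymm := by
  have := hA.1
  rw [Matrix.IsHermitian, conjTranspose] at this
  rw [show Aᵀ.map star = Aᵀ from by ext; simp] at this
  exact this

lemma arith_aux (C K x v eps a : ℝ) (hC : 0 ≤ C) (hK : 0 ≤ K) (hx : 0 ≤ x) (hv : 0 ≤ v)
    (heps : 0 < eps) (ha : 0 < a) (ha3 : 2 * C * v * (K + 1) / eps + 1 ≤ a)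
    (hxv : a * x ≤ 2 * v) : K * (C * x) ≤ eps := by
  have h7 : 2 * C * v * (K + 1) ≤ eps * a := by
    have := mul_le_mul_of_nonneg_left ha3 heps.le
    rw [mul_add, mul_div_cancel₀ _ heps.ne'] at this
    linarith
  have h8 : K * (C * x) * a ≤ eps * a := by
    have h81 : K * C * (a * x) ≤ K * C * (2 * v) :=
      mul_le_mul_of_nonneg_left hxv (mul_nonneg hK hC)
    have h82 : 0 ≤ 2 * C * v := by positivity
    nlinarith [h81, h82, h7]
  exact le_of_mul_le_mul_right (by linarith) ha

theorem stmt_16 (n : ℕ)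
    (L : Matrix (Fin n) (Fin n) ℝ →ₗ[ℝ] Matrix (Fin n) (Fin n) ℝ)
    (hLsymm : ∀ X : Matrix (Fin n) (Fin n) ℝ, X.IsSymm → (L X).IsSymm)
    (hres : ∃ α₀ : ℝ, ∀ α > α₀,
      (∀ Y : Matrix (Fin n) (Fin n) ℝ, Y.IsSymm → ∃ X, X.IsSymm ∧ α • X - L X = Y) ∧
      (∀ X : Matrix (Fin n) (Fin n) ℝ, X.IsSymm → (α • X - L X).PosSemidef → X.PosSemidef))
    (V1 V2 : Matrix (Fin n) (Fin n) ℝ)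
    (hV1 : V1.PosSemidef) (hV2 : V2.PosSemidef)
    (horth : (V1 * V2).trace = 0) :
    0 ≤ (L V1 * V2).trace := by
  obtain ⟨α₀, hresolvent⟩ := hres
  set Lc := LinearMap.toContinuousLinearMap L with hLcdef
  set φ : Matrix (Fin n) (Fin n) ℝ →ₗ[ℝ] ℝ :=
    (Matrix.traceLinearMap (Fin n) ℝ ℝ).comp ((LinearMap.mulRight ℝ V2).comp L) with hφdef
  set φc := LinearMap.toContinuousLinearMap φ with hφcdef
  have hφ : ∀ M, φc M = (L M * V2).trace := fun M => rfl
  have hLcapp : ∀ M, Lc M = L M := fun M => rfl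
  set C := @Norm.norm _ ContinuousLinearMap.hasOpNorm Lc with hCdef
  set K := @Norm.norm _ ContinuousLinearMap.hasOpNorm φc with hKdef
  have hC : 0 ≤ C := norm_nonneg _
  have hK : 0 ≤ K := norm_nonneg _
  have hφnorm : ∀ M : Matrix (Fin n) (Fin n) ℝ, ‖φc M‖ ≤ K * ‖M‖ := fun M => φc.le_opNorm M
  clear_value C K
  clear_value Lc φ φc
  have key : ∀ ε : ℝ, 0 < ε → (0 : ℝ) ≤ (L V1 * V2).trace + ε := by
    intro ε hε
    set α : ℝ := max (α₀ + 1) (max (2 * C + 1) (2 * C * ‖V1‖ * (K + 1) / ε + 1)) with hαdef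
    have hα₀ : α₀ < α := lt_of_lt_of_le (lt_add_one α₀) (le_max_left _ _)
    have hα2C : 2 * C + 1 ≤ α := le_trans (le_max_left _ _) (le_max_right _ _)
    have hα3 : 2 * C * ‖V1‖ * (K + 1) / ε + 1 ≤ α :=
      le_trans (le_max_right _ _) (le_max_right _ _)
    have hαpos : 0 < α := by linarith
    clear_value α
    obtain ⟨X, hXs, hXeq⟩ := (hresolvent α hα₀).1 V1 (psd_isSymm hV1)
    have hXpsd : X.PosSemidef := (hresolvent α hα₀).2 X hXs (by rw [hXeq]; exact hV1)
    have ht1 : 0 ≤ (X * V2).trace := psd_trace_mul_nonneg hXpsd hV2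
    have hLXeq : L X = α • X - V1 := by rw [← hXeq]; abel
    have hLXtr : (L X * V2).trace = α * (X * V2).trace := by
      rw [hLXeq, Matrix.sub_mul, Matrix.smul_mul, trace_sub, trace_smul, horth,
        smul_eq_mul, sub_zero]
    have hLXnn : 0 ≤ (L X * V2).trace := by
      rw [hLXtr]; exact mul_nonneg hαpos.le ht1
    set W : Matrix (Fin n) (Fin n) ℝ := α • X with hWdef
    have hLW : L W = α • L X := by rw [hWdef]; exact L.map_smul α X
    have hWV1 : W - V1 = L X := by rw [hWdef, ← hXeq]; abel
    -- norm bounds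
    have hLXnorm : ‖L X‖ ≤ C * ‖X‖ := by
      have h := Lc.le_opNorm X
      erw [hLcapp] at h
      rw [hCdef]
      exact h
    have hWnorm0 : ‖W‖ = α * ‖X‖ := by
      rw [hWdef, norm_smul, Real.norm_eq_abs, abs_of_pos hαpos]
    clear_value W
    have hWle : ‖W‖ ≤ 2 * ‖V1‖ := by
      have h1 : ‖W‖ ≤ ‖V1‖ + ‖L X‖ := by
        have : W = V1 + L X := by rw [← hWV1]; abel
        calc ‖W‖ = ‖V1 + L X‖ := by rw [this]
          _ ≤ ‖V1‖ + ‖L X‖ := norm_add_le _ _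
      have h2 : ‖L X‖ ≤ C * ‖X‖ := hLXnorm
      have h3 : 2 * C * ‖X‖ ≤ α * ‖X‖ :=
        mul_le_mul_of_nonneg_right (by linarith) (norm_nonneg _)
      have h4 : ‖X‖ ≥ 0 := norm_nonneg _
      -- ‖W‖ = α‖X‖ ≤ ‖V1‖ + C‖X‖ and 2C‖X‖ ≤ α‖X‖
      linarith [hWnorm0 ▸ h1, h2, h3, hWnorm0]
    have hdist : ‖W - V1‖ ≤ C * ‖X‖ := by rw [hWV1]; exact hLXnorm
    have hXnorm : α * ‖X‖ ≤ 2 * ‖V1‖ := by rw [← hWnorm0]; exact hWle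
    -- positivity at W
    have hφW : 0 ≤ φc W := by
      rw [hφ, hLW, Matrix.smul_mul, trace_smul, smul_eq_mul]
      exact mul_nonneg hαpos.le hLXnn
    -- error bound
    have herr : φc (W - V1) ≤ K * ‖W - V1‖ := by
      calc φc (W - V1) ≤ |φc (W - V1)| := le_abs_self _
        _ = ‖φc (W - V1)‖ := (Real.norm_eq_abs _).symm
        _ ≤ K * ‖W - V1‖ := hφnorm _
    have hsplit : φc W = φc V1 + φc (W - V1) := by
      rw [← map_add]; congr 1; abel
    -- final arithmetic: K * ‖W - V1‖ ≤ ε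
    have hfin : K * ‖W - V1‖ ≤ ε := by
      have h5 : K * ‖W - V1‖ ≤ K * (C * ‖X‖) := mul_le_mul_of_nonneg_left hdist hK
      have h12 : K * (C * ‖X‖) ≤ ε :=
        arith_aux C K ‖X‖ ‖V1‖ ε α hC hK (norm_nonneg X) (norm_nonneg V1) hε hαpos hα3 hXnorm
      linarith
    have : φc V1 = (L V1 * V2).trace := hφ V1
    linarith [hsplit, hφW, herr, hfin, this]
  have := le_of_forall_pos_le_add (a := (0:ℝ)) (b := (L V1 * V2).trace) ?_
  · exact this
  · intro ε hε; linarith [key ε hε]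
end
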